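/- For real α > -1, y > 0, and natural numbers m and n ≥ 1, the three-term recurrence holds: (n+1) I_{m,n+1} - (2n + α + 1 + 1/y) I_{m,n} + (n+α) I_{m,n-1} = -(1/y) · (Γ(α+n+1)/n!) · δ_{m,n}, where δ_{m,n} is the Kronecker delta. -/

import Mathlib

open MeasureTheory Real Set Polynomial

lemma gammaPos (α : ℝ) (hα : -1 < α) (j : ℕ) : 0 < Real.Gamma (α + j + 1) :=
  Real.Gamma_pos_of_pos (by have : (0:ℝ) ≤ j := Nat.cast_nonneg j; linarith)

lemma gamma_shift (x : ℝ) (hx : 0 < x) (k : ℕ) :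
    Real.Gamma (x + k) = (ascPochhammer ℝ k).eval x * Real.Gamma x := by
  induction k with
  | zero => simp
  | succ k ih =>
    have h1 : x + (k + 1 : ℕ) = (x + k) + 1 := by push_cast; ring
    rw [h1, Real.Gamma_add_one (by positivity), ih, ascPochhammer_succ_eval]
    ring

lemma alt_sum_poly {n : ℕ} (P : Polynomial ℝ) (h : P.degree < n) :
    ∑ j ∈ Finset.range (n+1), (-1:ℝ)^j * (n.choose j) * P.eval (j:ℝ) = 0 := by
  induction n generalizing P with
  | zero =>
    have : P = 0 := by
      rw [← Polynomial.degree_eq_bot]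
      exact Nat.WithBot.lt_zero_iff.mp (by exact_mod_cast h)
    simp [this]
  | succ n ih =>
    set Q : Polynomial ℝ := P.comp (X + C 1) - P with hQdef
    have hQdeg : Q.degree < (n : WithBot ℕ) := by
      rcases eq_or_ne P 0 with h0 | h0
      · have : Q = 0 := by simp [hQdef, h0]
        rw [this, Polynomial.degree_zero]
        exact WithBot.bot_lt_coe n
      · have hx1 : (X + C (1:ℝ)).natDegree = 1 := Polynomial.natDegree_X_add_C 1
        have hlc : (P.comp (X + C 1)).leadingCoeff = P.leadingCoeff := by
          rw [Polynomial.leadingCoeff_comp (by rw [hx1]; exact one_ne_zero)]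
          rw [Polynomial.leadingCoeff_X_add_C, one_pow, mul_one]
        have hc0 : P.comp (X + C 1) ≠ 0 := by
          intro hc
          apply h0
          rw [← Polynomial.leadingCoeff_eq_zero, ← hlc, hc, Polynomial.leadingCoeff_zero]
        have hdc : (P.comp (X + C 1)).degree = P.degree := by
          rw [Polynomial.degree_eq_natDegree h0, Polynomial.degree_eq_natDegree hc0,
            Polynomial.natDegree_comp, hx1, mul_one]
        have hlt : Q.degree < (P.comp (X + C 1)).degree :=
          Polynomial.degree_sub_lt hdc hc0 hlc
        rw [hdc] at hlt
        have hle : P.degree ≤ (n : WithBot ℕ) := by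
          rcases hd : P.degree with _ | k
          · exact bot_le
          · rw [hd] at h
            exact WithBot.coe_le_coe.mpr (Nat.lt_succ_iff.mp (WithBot.coe_lt_coe.mp h))
        exact lt_of_lt_of_le hlt hle
    have hQeval : ∀ i : ℕ, Q.eval (i : ℝ) = P.eval ((i : ℝ) + 1) - P.eval (i : ℝ) := by
      intro i; simp [hQdef]
    have e1 : ∑ j ∈ Finset.range (n+1+1), (-1:ℝ)^j * ((n+1).choose j) * P.eval (j:ℝ)
        = (∑ i ∈ Finset.range (n+1), ((-1:ℝ)^(i+1) * (n.choose i) * P.eval ((i:ℝ)+1)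
            + (-1:ℝ)^(i+1) * (n.choose (i+1)) * P.eval ((i:ℝ)+1))) + P.eval 0 := by
      rw [Finset.sum_range_succ']
      congr 1
      · refine Finset.sum_congr rfl fun i _ => ?_
        rw [Nat.choose_succ_succ]
        push_cast
        ring
      · simp
    have e2 : (∑ i ∈ Finset.range (n+1), (-1:ℝ)^(i+1) * (n.choose (i+1)) * P.eval ((i:ℝ)+1))
          + P.eval 0
        = ∑ j ∈ Finset.range (n+1), (-1:ℝ)^j * (n.choose j) * P.eval (j:ℝ) := by
      have := (Finset.sum_range_succ' (fun j => (-1:ℝ)^j * (n.choose j) * P.eval (j:ℝ)) (n+1))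
      rw [Finset.sum_range_succ] at this
      simp only [Nat.choose_succ_self, Nat.cast_zero, mul_zero, zero_mul, add_zero, pow_zero,
        Nat.choose_zero_right, Nat.cast_one, one_mul] at this
      push_cast at this ⊢
      linarith [this]
    rw [e1, Finset.sum_add_distrib, add_assoc, e2]
    have e3 : (∑ i ∈ Finset.range (n+1), (-1:ℝ)^(i+1) * (n.choose i) * P.eval ((i:ℝ)+1))
          + ∑ j ∈ Finset.range (n+1), (-1:ℝ)^j * (n.choose j) * P.eval (j:ℝ)
        = -∑ i ∈ Finset.range (n+1), (-1:ℝ)^i * (n.choose i) * Q.eval (i:ℝ) := by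
      rw [← Finset.sum_add_distrib, ← Finset.sum_neg_distrib]
      refine Finset.sum_congr rfl fun i _ => ?_
      rw [hQeval i, pow_succ]
      ring
    rw [e3, ih Q hQdeg, neg_zero]

lemma alt_sum_poly_top {n : ℕ} (P : Polynomial ℝ) (h : P.degree ≤ n) :
    ∑ j ∈ Finset.range (n+1), (-1:ℝ)^j * (n.choose j) * P.eval (j:ℝ)
      = (-1:ℝ)^n * n.factorial * P.coeff n := by
  set D : Polynomial ℝ := descPochhammer ℝ n with hD
  have hDmonic : D.Monic := monic_descPochhammer ℝ n
  have hDdeg : D.natDegree = n := descPochhammer_natDegree ℝ n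
  have hDdeg' : D.degree ≤ (n : WithBot ℕ) := by
    rw [← hDdeg]; exact Polynomial.degree_le_natDegree
  set P' : Polynomial ℝ := P - Polynomial.C (P.coeff n) * D with hP'
  have hP'deg : P'.degree < (n : WithBot ℕ) := by
    rw [Polynomial.degree_lt_iff_coeff_zero]
    intro m hm
    rcases eq_or_lt_of_le hm with rfl | hlt
    · simp [hP', Polynomial.coeff_C_mul]
      rw [← hDdeg]
      rw [show D.coeff D.natDegree = D.leadingCoeff from rfl, hDmonic.leadingCoeff]
      ring
    · have h1 : P.coeff m = 0 := by
        apply Polynomial.coeff_eq_zero_of_degree_lt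
        exact lt_of_le_of_lt h (by exact_mod_cast hlt)
      have h2 : D.coeff m = 0 := by
        apply Polynomial.coeff_eq_zero_of_degree_lt
        exact lt_of_le_of_lt hDdeg' (by exact_mod_cast hlt)
      simp [hP', Polynomial.coeff_C_mul, h1, h2]
  have key := alt_sum_poly P' hP'deg
  have hDsum : ∑ j ∈ Finset.range (n+1), (-1:ℝ)^j * (n.choose j) * D.eval (j:ℝ)
      = (-1:ℝ)^n * n.factorial := by
    rw [Finset.sum_range_succ]
    have hzero : ∀ j ∈ Finset.range n, (-1:ℝ)^j * (n.choose j) * D.eval (j:ℝ) = 0 := by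
      intro j hj
      rw [hD, descPochhammer_eval_eq_descFactorial]
      rw [Nat.descFactorial_eq_zero_iff_lt.mpr (Finset.mem_range.mp hj)]
      simp
    rw [Finset.sum_eq_zero hzero, zero_add, hD, descPochhammer_eval_eq_descFactorial,
      Nat.descFactorial_self, Nat.choose_self]
    simp
  calc ∑ j ∈ Finset.range (n+1), (-1:ℝ)^j * (n.choose j) * P.eval (j:ℝ)
      = (∑ j ∈ Finset.range (n+1), (-1:ℝ)^j * (n.choose j) * P'.eval (j:ℝ))
        + P.coeff n * ∑ j ∈ Finset.range (n+1), (-1:ℝ)^j * (n.choose j) * D.eval (j:ℝ) := by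
        rw [Finset.mul_sum, ← Finset.sum_add_distrib]
        refine Finset.sum_congr rfl fun j _ => ?_
        simp [hP']
        ring
    _ = (-1:ℝ)^n * n.factorial * P.coeff n := by rw [key, hDsum]; ring

/-- Generalized Laguerre polynomial `L_n^{(α)}(x)`. -/
noncomputable def genLaguerre (α : ℝ) (n : ℕ) (x : ℝ) : ℝ :=
  ∑ j ∈ Finset.range (n + 1),
    (-1 : ℝ) ^ j * (Real.Gamma (α + n + 1) /
      (Real.Gamma (α + j + 1) * (Nat.factorial (n - j)))) * x ^ j / (Nat.factorial j)

/-- The function `I_{m,n}^{(α,β)}(y)`. -/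
noncomputable def Imn (α β y : ℝ) (m n : ℕ) : ℝ :=
  ∫ ρ in Ioi (0 : ℝ), (1 + y * ρ)⁻¹ * ρ ^ α * Real.exp (-ρ) *
    genLaguerre α m ρ * genLaguerre β n ρ

noncomputable def lagC (α : ℝ) (n j : ℕ) : ℝ :=
  (-1:ℝ)^j * (Real.Gamma (α + n + 1) /
    (Real.Gamma (α + j + 1) * (Nat.factorial (n-j)))) / (Nat.factorial j)

lemma genLaguerre_eq (α : ℝ) (n : ℕ) (x : ℝ) :
    genLaguerre α n x = ∑ j ∈ Finset.range (n+1), lagC α n j * x ^ j := by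
  unfold genLaguerre lagC
  refine Finset.sum_congr rfl fun j _ => ?_
  ring

lemma genLaguerre_continuous (α : ℝ) (n : ℕ) : Continuous (genLaguerre α n) := by
  unfold genLaguerre
  exact continuous_finset_sum _ fun j _ => by fun_prop

lemma int_mono (α : ℝ) (hα : -1 < α) (k : ℝ) (hk : 0 ≤ k) :
    IntegrableOn (fun ρ : ℝ => ρ ^ (α + k) * Real.exp (-ρ)) (Ioi 0) := by
  have h := Real.GammaIntegral_convergent (s := α + k + 1) (by linarith)
  have : α + k + 1 - 1 = α + k := by ring
  rw [this] at h
  exact h.congr_fun (fun x _ => mul_comm _ _) measurableSet_Ioi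

lemma int_mono_val (α : ℝ) (hα : -1 < α) (k : ℝ) (hk : 0 ≤ k) :
    ∫ ρ in Ioi (0:ℝ), ρ ^ (α + k) * Real.exp (-ρ) = Real.Gamma (α + k + 1) := by
  rw [Real.Gamma_eq_integral (by linarith)]
  have : α + k + 1 - 1 = α + k := by ring
  rw [this]
  exact setIntegral_congr_fun measurableSet_Ioi fun x _ => mul_comm _ _

lemma lag_expand (α : ℝ) (k n : ℕ) : ∀ ρ ∈ Ioi (0:ℝ),
    ρ ^ (α + (k:ℝ)) * Real.exp (-ρ) * genLaguerre α n ρ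
      = ∑ j ∈ Finset.range (n+1), lagC α n j * (ρ ^ (α + ((k+j : ℕ):ℝ)) * Real.exp (-ρ)) := by
  intro ρ hρ
  rw [genLaguerre_eq, Finset.mul_sum]
  refine Finset.sum_congr rfl fun j _ => ?_
  have hρ0 : (0:ℝ) < ρ := hρ
  have : ρ ^ (α + ((k+j:ℕ):ℝ)) = ρ ^ (α + (k:ℝ)) * ρ ^ j := by
    rw [← Real.rpow_natCast ρ j, ← Real.rpow_add hρ0]
    push_cast
    ring_nf
  rw [this]
  ring

lemma int_mono_lag (α : ℝ) (hα : -1 < α) (k n : ℕ) :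
    IntegrableOn (fun ρ : ℝ => ρ ^ (α + (k:ℝ)) * Real.exp (-ρ) * genLaguerre α n ρ)
      (Ioi 0) := by
  have hint : IntegrableOn (fun ρ : ℝ => ∑ j ∈ Finset.range (n+1),
      lagC α n j * (ρ ^ (α + ((k+j : ℕ):ℝ)) * Real.exp (-ρ))) (Ioi 0) := by
    apply integrable_finset_sum
    intro j _
    exact (int_mono α hα ((k+j:ℕ):ℝ) (by positivity)).const_mul _
  exact hint.congr_fun (fun ρ hρ => (lag_expand α k n ρ hρ).symm) measurableSet_Ioi

lemma laguerre_moment (α : ℝ) (hα : -1 < α) (n k : ℕ) (hk : k ≤ n) :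
    ∫ ρ in Ioi (0:ℝ), ρ ^ (α + (k:ℝ)) * Real.exp (-ρ) * genLaguerre α n ρ
      = if k = n then (-1:ℝ)^n * Real.Gamma (α + n + 1) else 0 := by
  set P : Polynomial ℝ := (ascPochhammer ℝ k).comp (Polynomial.X + Polynomial.C (α+1))
    with hP
  have hPdeg : P.natDegree = k := by
    rw [hP, Polynomial.natDegree_comp, ascPochhammer_natDegree,
      Polynomial.natDegree_X_add_C, mul_one]
  have step1 : ∫ ρ in Ioi (0:ℝ), ρ ^ (α + (k:ℝ)) * Real.exp (-ρ) * genLaguerre α n ρ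
      = ∑ j ∈ Finset.range (n+1), lagC α n j * Real.Gamma (α + ((k+j:ℕ):ℝ) + 1) := by
    rw [setIntegral_congr_fun measurableSet_Ioi (lag_expand α k n)]
    rw [integral_finset_sum _ (fun j _ =>
      ((int_mono α hα ((k+j:ℕ):ℝ) (by positivity)).const_mul _))]
    refine Finset.sum_congr rfl fun j _ => ?_
    rw [integral_const_mul, int_mono_val α hα _ (by positivity)]
  have step2 : ∀ j ∈ Finset.range (n+1),
      lagC α n j * Real.Gamma (α + ((k+j:ℕ):ℝ) + 1)
        = Real.Gamma (α + n + 1) / n.factorial *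
            ((-1:ℝ)^j * (n.choose j) * P.eval (j:ℝ)) := by
    intro j hj
    have hjn : j ≤ n := Nat.lt_succ_iff.mp (Finset.mem_range.mp hj)
    have hPev : P.eval (j:ℝ) = (ascPochhammer ℝ k).eval (α + j + 1) := by
      rw [hP, Polynomial.eval_comp]
      congr 1
      simp
      ring
    have hGam : Real.Gamma (α + ((k+j:ℕ):ℝ) + 1)
        = (ascPochhammer ℝ k).eval (α + j + 1) * Real.Gamma (α + j + 1) := by
      rw [show α + ((k+j:ℕ):ℝ) + 1 = (α + j + 1) + k by push_cast; ring]
      exact gamma_shift _ (by have : (0:ℝ) ≤ j := Nat.cast_nonneg j; linarith) k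
    have hchoose : (n.choose j : ℝ) = n.factorial / (j.factorial * (n-j).factorial) := by
      rw [eq_div_iff (by positivity)]
      push_cast [← Nat.choose_mul_factorial_mul_factorial hjn]
      ring
    have hG1 := gammaPos α hα j
    have hf1 : (0:ℝ) < (j.factorial : ℝ) := by exact_mod_cast j.factorial_pos
    have hf2 : (0:ℝ) < ((n-j).factorial : ℝ) := by exact_mod_cast (n-j).factorial_pos
    have hf3 : (0:ℝ) < (n.factorial : ℝ) := by exact_mod_cast n.factorial_pos
    rw [hGam, hPev, hchoose]
    unfold lagC
    field_simp
  rw [step1, Finset.sum_congr rfl step2, ← Finset.mul_sum]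
  have hf3 : (0:ℝ) < (n.factorial : ℝ) := by exact_mod_cast n.factorial_pos
  by_cases hkn : k = n
  · subst hkn
    have hdegle : P.degree ≤ (k : WithBot ℕ) := by
      rw [← hPdeg]; exact Polynomial.degree_le_natDegree
    have hmonic : P.Monic := (monic_ascPochhammer ℝ k).comp_X_add_C _
    have hcoeff : P.coeff k = 1 := by
      have := hmonic.leadingCoeff
      rwa [Polynomial.leadingCoeff, hPdeg] at this
    rw [alt_sum_poly_top P hdegle, hcoeff, if_pos rfl]
    field_simp
  · have hdeglt : P.degree < (n : WithBot ℕ) := by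
      apply lt_of_le_of_lt (le_trans Polynomial.degree_le_natDegree (by rw [hPdeg]))
      exact_mod_cast lt_of_le_of_ne hk hkn
    rw [alt_sum_poly P hdeglt, mul_zero, if_neg hkn]

lemma lag2_expand (α : ℝ) (m n : ℕ) : ∀ ρ ∈ Ioi (0:ℝ),
    ρ ^ α * Real.exp (-ρ) * genLaguerre α m ρ * genLaguerre α n ρ
      = ∑ j ∈ Finset.range (m+1),
          lagC α m j * (ρ ^ (α + (j:ℝ)) * Real.exp (-ρ) * genLaguerre α n ρ) := by
  intro ρ hρ
  have hρ0 : (0:ℝ) < ρ := hρ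
  rw [genLaguerre_eq α m, Finset.mul_sum, Finset.sum_mul]
  refine Finset.sum_congr rfl fun j _ => ?_
  have : ρ ^ (α + (j:ℝ)) = ρ ^ α * ρ ^ j := by
    rw [← Real.rpow_natCast ρ j, ← Real.rpow_add hρ0]
  rw [this]
  ring

lemma int_lag2 (α : ℝ) (hα : -1 < α) (m n : ℕ) :
    IntegrableOn (fun ρ : ℝ => ρ ^ α * Real.exp (-ρ) * genLaguerre α m ρ * genLaguerre α n ρ)
      (Ioi 0) := by
  have hint : IntegrableOn (fun ρ : ℝ => ∑ j ∈ Finset.range (m+1),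
      lagC α m j * (ρ ^ (α + (j:ℝ)) * Real.exp (-ρ) * genLaguerre α n ρ)) (Ioi 0) := by
    apply integrable_finset_sum
    intro j _
    exact (int_mono_lag α hα j n).const_mul _
  exact hint.congr_fun (fun ρ hρ => (lag2_expand α m n ρ hρ).symm) measurableSet_Ioi

lemma laguerre_orth_le (α : ℝ) (hα : -1 < α) {m n : ℕ} (hmn : m ≤ n) :
    ∫ ρ in Ioi (0:ℝ), ρ ^ α * Real.exp (-ρ) * genLaguerre α m ρ * genLaguerre α n ρ
      = if m = n then Real.Gamma (α + n + 1) / n.factorial else 0 := by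
  rw [setIntegral_congr_fun measurableSet_Ioi (lag2_expand α m n)]
  rw [integral_finset_sum _ (fun j _ => ((int_mono_lag α hα j n).const_mul _))]
  have key : ∀ j ∈ Finset.range (m+1),
      lagC α m j * ∫ ρ in Ioi (0:ℝ), ρ ^ (α + (j:ℝ)) * Real.exp (-ρ) * genLaguerre α n ρ
        = if j = n then lagC α m j * ((-1:ℝ)^n * Real.Gamma (α + n + 1)) else 0 := by
    intro j hj
    have hjn : j ≤ n := le_trans (Nat.lt_succ_iff.mp (Finset.mem_range.mp hj)) hmn
    rw [laguerre_moment α hα n j hjn]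
    by_cases h : j = n
    · rw [if_pos h, if_pos h]
    · rw [if_neg h, if_neg h, mul_zero]
  rw [show (∑ j ∈ Finset.range (m+1), ∫ ρ in Ioi (0:ℝ),
        lagC α m j * (ρ ^ (α + (j:ℝ)) * Real.exp (-ρ) * genLaguerre α n ρ))
      = ∑ j ∈ Finset.range (m+1),
          if j = n then lagC α m j * ((-1:ℝ)^n * Real.Gamma (α + n + 1)) else 0 by
    refine Finset.sum_congr rfl fun j hj => ?_
    rw [integral_const_mul]
    exact key j hj]
  by_cases hmn' : m = n
  · subst hmn'
    rw [Finset.sum_ite_eq' (Finset.range (m+1)) m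
      (fun j => lagC α m j * ((-1:ℝ)^m * Real.Gamma (α + m + 1)))]
    rw [if_pos (Finset.self_mem_range_succ m), if_pos rfl]
    unfold lagC
    have hG := gammaPos α hα m
    have hf : (0:ℝ) < (m.factorial : ℝ) := by exact_mod_cast m.factorial_pos
    simp only [Nat.sub_self, Nat.factorial_zero, Nat.cast_one, mul_one]
    field_simp
    rw [← pow_mul, mul_comm, pow_mul]
    norm_num
  · rw [if_neg hmn']
    apply Finset.sum_eq_zero
    intro j hj
    rw [if_neg]
    intro h
    subst h
    exact hmn' (le_antisymm hmn (Nat.lt_succ_iff.mp (Finset.mem_range.mp hj)))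

lemma laguerre_orth (α : ℝ) (hα : -1 < α) (m n : ℕ) :
    ∫ ρ in Ioi (0:ℝ), ρ ^ α * Real.exp (-ρ) * genLaguerre α m ρ * genLaguerre α n ρ
      = if m = n then Real.Gamma (α + n + 1) / n.factorial else 0 := by
  rcases le_total m n with h | h
  · exact laguerre_orth_le α hα h
  · have hsw : (∫ ρ in Ioi (0:ℝ), ρ ^ α * Real.exp (-ρ) * genLaguerre α m ρ * genLaguerre α n ρ)
        = ∫ ρ in Ioi (0:ℝ), ρ ^ α * Real.exp (-ρ) * genLaguerre α n ρ * genLaguerre α m ρ :=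
      setIntegral_congr_fun measurableSet_Ioi (fun ρ _ => by ring)
    rw [hsw, laguerre_orth_le α hα h]
    by_cases hmn : m = n
    · subst hmn
      simp
    · rw [if_neg (fun h' => hmn h'.symm), if_neg hmn]

lemma gamma_add_nat (α : ℝ) (hα : -1 < α) (j t : ℕ) :
    Real.Gamma (α + ↑(j + t) + 1)
      = (ascPochhammer ℝ t).eval (α + j + 1) * Real.Gamma (α + ↑j + 1) := by
  rw [show α + ↑(j+t) + 1 = (α + ↑j + 1) + ↑t by push_cast; ring]
  exact gamma_shift _ (by have : (0:ℝ) ≤ j := Nat.cast_nonneg j; linarith) t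

lemma asc_one_eval (x : ℝ) : (ascPochhammer ℝ 1).eval x = x := by
  simp [ascPochhammer_one]

lemma asc_two_eval (x : ℝ) : (ascPochhammer ℝ 2).eval x = x * (x + 1) := by
  rw [show (2:ℕ) = 1+1 from rfl, ascPochhammer_succ_eval, asc_one_eval]
  push_cast
  ring

lemma laguerre_K (α : ℝ) (hα : -1 < α) (m : ℕ) : ∀ j ∈ Finset.range (m+3),
    ((m:ℝ)+2) * lagC α (m+2) j + (if 1 ≤ j then lagC α (m+1) (j-1) else 0)
      - (2*(m:ℝ)+α+3) * (if j ≤ m+1 then lagC α (m+1) j else 0)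
      + ((m:ℝ)+1+α) * (if j ≤ m then lagC α m j else 0) = 0 := by
  intro j hj
  have hj3 : j < m + 3 := Finset.mem_range.mp hj
  rcases Nat.eq_zero_or_pos j with rfl | hj0
  · simp only [if_neg (by omega : ¬ 1 ≤ 0), if_pos (by omega : 0 ≤ m+1),
      if_pos (Nat.zero_le m)]
    unfold lagC
    rw [gamma_add_nat α hα m 2, gamma_add_nat α hα m 1, asc_two_eval, asc_one_eval]
    have hb := gammaPos α hα m
    have h0 := gammaPos α hα 0
    rw [show (0:ℕ) = 0 from rfl] at h0
    simp only [Nat.sub_zero, pow_zero, Nat.cast_zero] at *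
    rw [show (m+2).factorial = (m+2) * (m+1).factorial from Nat.factorial_succ (m+1),
      show (m+1).factorial = (m+1) * m.factorial from Nat.factorial_succ m]
    have hf : (0:ℝ) < (m.factorial : ℝ) := by exact_mod_cast m.factorial_pos
    have hm1 : (0:ℝ) < (m:ℝ) + 1 := by positivity
    have hm2 : (0:ℝ) < (m:ℝ) + 2 := by positivity
    have h01 : (0:ℝ) < α + 1 := by linarith
    push_cast
    field_simp
    ring
  · obtain ⟨i, rfl⟩ : ∃ i, j = i + 1 := ⟨j-1, by omega⟩
    have hisub : i + 1 - 1 = i := rfl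
    have h2i := gammaPos α hα i
    have hai : (0:ℝ) < α + ↑i + 1 := by
      have : (0:ℝ) ≤ i := Nat.cast_nonneg i
      linarith
    have hfi : (0:ℝ) < (i.factorial : ℝ) := by exact_mod_cast i.factorial_pos
    rcases lt_trichotomy (i+1) (m+1) with hlt | heq | hgt
    · obtain ⟨k, rfl⟩ : ∃ k, m = i + 1 + k := ⟨m - (i+1), by omega⟩
      simp only [hisub, if_pos (by omega : 1 ≤ i+1), if_pos (by omega : i+1 ≤ i+1+k+1),
        if_pos (by omega : i+1 ≤ i+1+k)]
      unfold lagC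
      rw [show i+1+k+2 = (i+1+k) + 2 from rfl, show i+1+k+1 = (i+1+k) + 1 from rfl]
      rw [gamma_add_nat α hα (i+1+k) 2, gamma_add_nat α hα (i+1+k) 1,
        show (i:ℕ)+1 = i + 1 from rfl, gamma_add_nat α hα i 1,
        asc_two_eval, asc_one_eval]
      rw [show (i+1+k) + 2 - (i+1) = k+2 from by omega,
        show (i+1+k) + 1 - i = k+2 from by omega,
        show (i+1+k) + 1 - (i+1) = k+1 from by omega,
        show (i+1+k) - (i+1) = k from by omega]
      rw [show (k+2).factorial = (k+2) * (k+1).factorial from Nat.factorial_succ (k+1),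
        show (k+1).factorial = (k+1) * k.factorial from Nat.factorial_succ k,
        show (i+1).factorial = (i+1) * i.factorial from Nat.factorial_succ i]
      have hfk : (0:ℝ) < (k.factorial : ℝ) := by exact_mod_cast k.factorial_pos
      simp only [asc_one_eval]
      push_cast
      field_simp
      ring
    · have him : i = m := by omega
      subst him
      simp only [hisub, if_pos (by omega : 1 ≤ i+1), if_pos (by omega : i+1 ≤ i+1),
        if_neg (by omega : ¬ i+1 ≤ i)]
      unfold lagC
      rw [show i+2 = i + 2 from rfl, show (i:ℕ)+1 = i + 1 from rfl,
        gamma_add_nat α hα i 2, gamma_add_nat α hα i 1, asc_two_eval, asc_one_eval]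
      rw [show i + 2 - (i+1) = 1 from by omega, show i + 1 - i = 1 from by omega,
        Nat.sub_self]
      rw [show (i+1).factorial = (i+1) * i.factorial from Nat.factorial_succ i]
      push_cast
      simp only [Nat.factorial_one, Nat.factorial_zero, Nat.cast_one]
      field_simp
      ring
    · have him : i = m + 1 := by omega
      subst him
      simp only [hisub, if_pos (by omega : 1 ≤ m+1+1), if_neg (by omega : ¬ m+1+1 ≤ m+1),
        if_neg (by omega : ¬ m+1+1 ≤ m)]
      unfold lagC
      rw [show m+1+1 = m + 2 from rfl]
      simp only [Nat.sub_self]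
      have h2m := gammaPos α hα (m+2)
      have h1m := gammaPos α hα (m+1)
      rw [show (m+2).factorial = (m+2) * (m+1).factorial from Nat.factorial_succ (m+1)]
      have hfm : (0:ℝ) < ((m+1).factorial : ℝ) := by exact_mod_cast (m+1).factorial_pos
      push_cast
      simp only [Nat.factorial_zero, Nat.cast_one]
      push_cast at h2m h1m
      field_simp
      ring

lemma laguerre_rec (α : ℝ) (hα : -1 < α) (m : ℕ) (x : ℝ) :
    ((m:ℝ)+2) * genLaguerre α (m+2) x + x * genLaguerre α (m+1) x
      - (2*(m:ℝ)+α+3) * genLaguerre α (m+1) x + ((m:ℝ)+1+α) * genLaguerre α m x = 0 := by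
  have h1 : ((m:ℝ)+2) * genLaguerre α (m+2) x
      = ∑ j ∈ Finset.range (m+3), ((m:ℝ)+2) * lagC α (m+2) j * x^j := by
    rw [genLaguerre_eq, Finset.mul_sum]
    exact Finset.sum_congr rfl fun j _ => by ring
  have h2 : x * genLaguerre α (m+1) x
      = ∑ j ∈ Finset.range (m+3), (if 1 ≤ j then lagC α (m+1) (j-1) else 0) * x^j := by
    rw [genLaguerre_eq, Finset.mul_sum]
    rw [Finset.sum_range_succ' (fun j => (if 1 ≤ j then lagC α (m+1) (j-1) else 0) * x^j) (m+2)]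
    rw [if_neg (by omega : ¬ (1:ℕ) ≤ 0), zero_mul, add_zero]
    refine Finset.sum_congr rfl fun j _ => ?_
    rw [if_pos (Nat.le_add_left 1 j), Nat.add_sub_cancel]
    ring
  have h3 : (2*(m:ℝ)+α+3) * genLaguerre α (m+1) x
      = ∑ j ∈ Finset.range (m+3),
          (2*(m:ℝ)+α+3) * ((if j ≤ m+1 then lagC α (m+1) j else 0) * x^j) := by
    rw [genLaguerre_eq, Finset.mul_sum]
    rw [Finset.sum_range_succ (fun j =>
      (2*(m:ℝ)+α+3) * ((if j ≤ m+1 then lagC α (m+1) j else 0) * x^j)) (m+2)]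
    rw [if_neg (by omega : ¬ m+2 ≤ m+1)]
    simp only [zero_mul, mul_zero, add_zero]
    refine Finset.sum_congr rfl fun j hj => ?_
    rw [if_pos (show j ≤ m+1 by have := Finset.mem_range.mp hj; omega)]
  have h4 : ((m:ℝ)+1+α) * genLaguerre α m x
      = ∑ j ∈ Finset.range (m+3),
          ((m:ℝ)+1+α) * ((if j ≤ m then lagC α m j else 0) * x^j) := by
    rw [genLaguerre_eq, Finset.mul_sum]
    rw [Finset.sum_range_succ (fun j =>
      ((m:ℝ)+1+α) * ((if j ≤ m then lagC α m j else 0) * x^j)) (m+2)]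
    rw [Finset.sum_range_succ (fun j =>
      ((m:ℝ)+1+α) * ((if j ≤ m then lagC α m j else 0) * x^j)) (m+1)]
    rw [if_neg (by omega : ¬ m+2 ≤ m), if_neg (by omega : ¬ m+1 ≤ m)]
    simp only [zero_mul, mul_zero, add_zero]
    refine Finset.sum_congr rfl fun j hj => ?_
    rw [if_pos (show j ≤ m by have := Finset.mem_range.mp hj; omega)]
  rw [h1, h2, h3, h4, ← Finset.sum_add_distrib, ← Finset.sum_sub_distrib,
    ← Finset.sum_add_distrib]
  apply Finset.sum_eq_zero
  intro j hj
  have hK := laguerre_K α hα m j hj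
  linear_combination x^j * hK

lemma int_weighted (α y : ℝ) (hα : -1 < α) (hy : 0 < y) (m n : ℕ) :
    IntegrableOn (fun ρ : ℝ => (1 + y*ρ)⁻¹ * ρ^α * Real.exp (-ρ) *
      genLaguerre α m ρ * genLaguerre α n ρ) (Ioi 0) := by
  apply Integrable.mono' ((int_lag2 α hα m n).abs)
  · apply ContinuousOn.aestronglyMeasurable _ measurableSet_Ioi
    apply ContinuousOn.mul
    apply ContinuousOn.mul
    apply ContinuousOn.mul
    apply ContinuousOn.mul
    · exact ContinuousOn.inv₀ (by fun_prop) (fun ρ hρ => by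
        have : (0:ℝ) < ρ := hρ
        positivity)
    · exact ContinuousOn.rpow_const continuousOn_id
        (fun ρ hρ => Or.inl (ne_of_gt hρ))
    · fun_prop
    · exact (genLaguerre_continuous α m).continuousOn
    · exact (genLaguerre_continuous α n).continuousOn
  · rw [ae_restrict_iff' measurableSet_Ioi]
    filter_upwards with ρ
    intro hρ
    have hρ0 : (0:ℝ) < ρ := hρ
    have h1 : (0:ℝ) < 1 + y * ρ := by positivity
    have h2 : (1 + y*ρ)⁻¹ ≤ 1 := by
      rw [inv_le_one_iff₀]
      right
      nlinarith
    have h3 : (0:ℝ) < (1 + y*ρ)⁻¹ := by positivity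
    rw [show (1 + y*ρ)⁻¹ * ρ^α * Real.exp (-ρ) * genLaguerre α m ρ * genLaguerre α n ρ
        = (1 + y*ρ)⁻¹ * (ρ^α * Real.exp (-ρ) * genLaguerre α m ρ * genLaguerre α n ρ)
      from by ring]
    rw [Real.norm_eq_abs, abs_mul, abs_of_pos h3]
    calc (1 + y*ρ)⁻¹ * |ρ^α * Real.exp (-ρ) * genLaguerre α m ρ * genLaguerre α n ρ|
        ≤ 1 * |ρ^α * Real.exp (-ρ) * genLaguerre α m ρ * genLaguerre α n ρ| := by
          apply mul_le_mul_of_nonneg_right h2 (abs_nonneg _)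
      _ = |ρ^α * Real.exp (-ρ) * genLaguerre α m ρ * genLaguerre α n ρ| := one_mul _

theorem Imn_three_term_recurrence (α y : ℝ) (hα : -1 < α) (hy : 0 < y)
    (m n : ℕ) (hn : 1 ≤ n) :
    ((n : ℝ) + 1) * Imn α α y m (n + 1) - (2 * n + α + 1 + 1 / y) * Imn α α y m n +
        ((n : ℝ) + α) * Imn α α y m (n - 1) =
      -(1 / y) * (Real.Gamma (α + n + 1) / (Nat.factorial n)) * (if m = n then 1 else 0) := by
  obtain ⟨p, rfl⟩ : ∃ p, n = p + 1 := ⟨n - 1, by omega⟩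
  have hp1 : p + 1 + 1 = p + 2 := rfl
  have hp2 : p + 1 - 1 = p := rfl
  rw [hp1, hp2]
  unfold Imn
  have hIa := (int_weighted α y hα hy m (p+2)).const_mul (((p:ℝ)+1) + 1)
  have hIb := (int_weighted α y hα hy m (p+1)).const_mul (2 * ((p:ℝ)+1) + α + 1 + 1/y)
  have hIc := (int_weighted α y hα hy m p).const_mul (((p:ℝ)+1) + α)
  push_cast
  rw [← integral_const_mul, ← integral_const_mul, ← integral_const_mul]
  have hIab : Integrable (fun ρ : ℝ => (((p:ℝ)+1) + 1) * ((1 + y*ρ)⁻¹ * ρ^α * Real.exp (-ρ) *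
      genLaguerre α m ρ * genLaguerre α (p+2) ρ)
      - (2 * ((p:ℝ)+1) + α + 1 + 1/y) * ((1 + y*ρ)⁻¹ * ρ^α * Real.exp (-ρ) *
      genLaguerre α m ρ * genLaguerre α (p+1) ρ)) (volume.restrict (Ioi 0)) := hIa.sub hIb
  rw [← integral_sub hIa hIb]
  rw [← integral_add hIab hIc]
  have hcong : ∀ ρ ∈ Ioi (0:ℝ),
      (((p:ℝ) + 1 + 1) * ((1 + y*ρ)⁻¹ * ρ^α * Real.exp (-ρ) *
          genLaguerre α m ρ * genLaguerre α (p+2) ρ)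
        - (2 * ((p:ℝ)+1) + α + 1 + 1/y) * ((1 + y*ρ)⁻¹ * ρ^α * Real.exp (-ρ) *
          genLaguerre α m ρ * genLaguerre α (p+1) ρ))
        + ((p:ℝ) + 1 + α) * ((1 + y*ρ)⁻¹ * ρ^α * Real.exp (-ρ) *
          genLaguerre α m ρ * genLaguerre α p ρ)
      = -(1/y) * (ρ^α * Real.exp (-ρ) * genLaguerre α m ρ * genLaguerre α (p+1) ρ) := by
    intro ρ hρ
    have hρ0 : (0:ℝ) < ρ := hρ
    have h1 : (0:ℝ) < 1 + y * ρ := by positivity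
    have hu : (1 + y*ρ) * (1 + y*ρ)⁻¹ = 1 := mul_inv_cancel₀ (ne_of_gt h1)
    have hrec := laguerre_rec α hα p ρ
    have hyne : y ≠ 0 := ne_of_gt hy
    have hy2 : y * (1/y) = 1 := mul_one_div_cancel hyne
    linear_combination ((1+y*ρ)⁻¹ * ρ^α * Real.exp (-ρ) * genLaguerre α m ρ) * hrec
      + (-(1/y) * ρ^α * Real.exp (-ρ) * genLaguerre α m ρ * genLaguerre α (p+1) ρ) * hu
      + (ρ^α * Real.exp (-ρ) * genLaguerre α m ρ * genLaguerre α (p+1) ρ * (1+y*ρ)⁻¹ * ρ) * hy2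
  rw [setIntegral_congr_fun measurableSet_Ioi hcong, integral_const_mul,
    laguerre_orth α hα m (p+1)]
  by_cases hmp : m = p + 1
  · rw [if_pos hmp, if_pos (by exact_mod_cast hmp)]
    push_cast
    ring
  · rw [if_neg hmp, if_neg (by exact_mod_cast hmp)]
    ring
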